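/- Let H = (V, E) be a hypergraph in which every vertex belongs to at least one hyperedge, let f be a fractional edge cover of H, let D be a finite domain, and for each hyperedge e ∈ E let R_e be a finite set of functions e → D. Then the join (the set of all tuples t : V → D whose restriction to e belongs to R_e for every e ∈ E) has size at most ∏_{e ∈ E} |R_e|^{f(e)}. -/

import Mathlib

open scoped Classical

open Finset

/-- Hölder's inequality for finite sums in `ℝ≥0∞`, via the counting measure. -/
lemma agm_holder {ι' D : Type} [Fintype D] (s : Finset ι') (a : ι' → D → ENNReal) (p : ι' → ℝ)
    (hp : ∑ i ∈ s, p i = 1) (hp0 : ∀ i ∈ s, 0 ≤ p i) :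
    ∑ d : D, ∏ i ∈ s, a i d ^ p i ≤ ∏ i ∈ s, (∑ d : D, a i d) ^ p i := by
  letI : MeasurableSpace D := ⊤
  have hm : ∀ g : D → ENNReal, Measurable g := fun g t _ => MeasurableSpace.measurableSet_top
  haveI : MeasurableSingletonClass D := ⟨fun _ => MeasurableSpace.measurableSet_top⟩
  have := ENNReal.lintegral_prod_norm_pow_le (μ := MeasureTheory.Measure.count) s
    (f := fun i d => a i d) (fun i _ => (hm _).aemeasurable) hp hp0
  simpa [MeasureTheory.lintegral_count, tsum_fintype] using this

/-- The main analytic step: combining Hölder with a fractional-cover weight normalization. -/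
lemma agm_chain {ι D : Type} [Fintype ι] [Fintype D] (J : Finset ι)
    (a : ι → D → ENNReal) (q : ι → ENNReal) (f : ι → ℝ)
    (hf0 : ∀ i, 0 ≤ f i) (hS : 1 ≤ ∑ i ∈ J, f i)
    (hqa : ∀ i ∈ J, ∑ d : D, a i d ≤ q i)
    (hnot : ∀ i ∉ J, ∀ d, a i d = q i) :
    ∑ d : D, ∏ i, a i d ^ f i ≤ ∏ i, q i ^ f i := by
  set S := ∑ i ∈ J, f i with hSdef
  have hSpos : (0 : ℝ) < S := lt_of_lt_of_le one_pos hS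
  set g : ι → ℝ := fun i => f i / S with hgdef
  have hg0 : ∀ i, 0 ≤ g i := fun i => div_nonneg (hf0 i) hSpos.le
  have hgsum : ∑ i ∈ J, g i = 1 := by
    rw [hgdef, ← Finset.sum_div, ← hSdef, div_self hSpos.ne']
  have hgle : ∀ i, g i ≤ f i := fun i => div_le_self (hf0 i) hS
  have haq : ∀ i ∈ J, ∀ d, a i d ≤ q i := fun i hi d =>
    le_trans (Finset.single_le_sum (fun d _ => zero_le) (mem_univ d)) (hqa i hi)
  set C := ∏ i ∈ Finset.univ \ J, q i ^ f i with hC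
  have hterm : ∀ d : D, ∏ i ∈ J, a i d ^ f i ≤
      (∏ i ∈ J, q i ^ (f i - g i)) * ∏ i ∈ J, a i d ^ g i := by
    intro d
    rw [← Finset.prod_mul_distrib]
    refine Finset.prod_le_prod' fun i hi => ?_
    calc a i d ^ f i = a i d ^ ((f i - g i) + g i) := by ring_nf
      _ = a i d ^ (f i - g i) * a i d ^ g i :=
          ENNReal.rpow_add_of_nonneg _ _ (sub_nonneg.2 (hgle i)) (hg0 i)
      _ ≤ q i ^ (f i - g i) * a i d ^ g i :=
          mul_le_mul_left (ENNReal.rpow_le_rpow (haq i hi d) (sub_nonneg.2 (hgle i))) _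
  calc ∑ d : D, ∏ i, a i d ^ f i
      = ∑ d : D, C * ∏ i ∈ J, a i d ^ f i := by
        refine Finset.sum_congr rfl fun d _ => ?_
        rw [← Finset.prod_sdiff (Finset.subset_univ J), hC]
        congr 1
        refine Finset.prod_congr rfl fun i hi => ?_
        rw [hnot i (Finset.mem_sdiff.1 hi).2 d]
    _ = C * ∑ d : D, ∏ i ∈ J, a i d ^ f i := by rw [Finset.mul_sum]
    _ ≤ C * ((∏ i ∈ J, q i ^ (f i - g i)) * ∑ d : D, ∏ i ∈ J, a i d ^ g i) := by
        refine mul_le_mul_right ?_ C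
        calc ∑ d : D, ∏ i ∈ J, a i d ^ f i
            ≤ ∑ d : D, (∏ i ∈ J, q i ^ (f i - g i)) * ∏ i ∈ J, a i d ^ g i :=
              Finset.sum_le_sum fun d _ => hterm d
          _ = (∏ i ∈ J, q i ^ (f i - g i)) * ∑ d : D, ∏ i ∈ J, a i d ^ g i := by
              rw [Finset.mul_sum]
    _ ≤ C * ((∏ i ∈ J, q i ^ (f i - g i)) * ∏ i ∈ J, (∑ d : D, a i d) ^ g i) :=
        mul_le_mul_right (mul_le_mul_right (agm_holder J a g hgsum (fun i _ => hg0 i)) _) C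
    _ ≤ C * ((∏ i ∈ J, q i ^ (f i - g i)) * ∏ i ∈ J, q i ^ g i) := by
        refine mul_le_mul_right (mul_le_mul_right (Finset.prod_le_prod' fun i hi => ?_) _) C
        exact ENNReal.rpow_le_rpow (hqa i hi) (hg0 i)
    _ = C * ∏ i ∈ J, q i ^ f i := by
        rw [← Finset.prod_mul_distrib]
        congr 1
        refine Finset.prod_congr rfl fun i hi => ?_
        rw [← ENNReal.rpow_add_of_nonneg _ _ (sub_nonneg.2 (hgle i)) (hg0 i)]
        ring_nf
    _ = ∏ i, q i ^ f i := by rw [hC, Finset.prod_sdiff (Finset.subset_univ J)]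

section AGMAux

variable {V D ι : Type} [Fintype V] [DecidableEq V] [Fintype D] [DecidableEq D] [Fintype ι]

/-- Partial join: tuples fixed to `d0` outside `A` that agree on `A` with some row of
each relation. -/
noncomputable def TT (E : ι → Finset V) (d0 : D) (A : Finset V)
    (R : (i : ι) → Finset ({x // x ∈ E i} → D)) : Finset (V → D) :=
  Finset.univ.filter (fun t => (∀ x ∉ A, t x = d0) ∧
    ∀ i, ∃ r ∈ R i, ∀ x : {x // x ∈ E i}, (↑x : V) ∈ A → t ↑x = r x)

/-- Projection of a relation to the part of its edge inside `A`. -/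
noncomputable def PJ (E : ι → Finset V) (d0 : D) (A : Finset V)
    (R : (i : ι) → Finset ({x // x ∈ E i} → D)) (i : ι) : Finset ({x // x ∈ E i} → D) :=
  (R i).image (fun r x => if (↑x : V) ∈ A then r x else d0)

lemma mem_TT {E : ι → Finset V} {d0 : D} {A : Finset V}
    {R : (i : ι) → Finset ({x // x ∈ E i} → D)} {t : V → D} :
    t ∈ TT E d0 A R ↔ (∀ x ∉ A, t x = d0) ∧
      ∀ i, ∃ r ∈ R i, ∀ x : {x // x ∈ E i}, (↑x : V) ∈ A → t ↑x = r x := by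
  simp [TT]

omit [Fintype V] [Fintype D] [Fintype ι] in
lemma agm_parta (E : ι → Finset V) (d0 : D) (A : Finset V) (v : V)
    (R : (i : ι) → Finset ({x // x ∈ E i} → D)) (i : ι) (hi : v ∉ E i) (d : D) :
    PJ E d0 A (fun i => (R i).filter (fun r => ∀ h : v ∈ E i, r ⟨v, h⟩ = d)) i
      = PJ E d0 (insert v A) R i := by
  unfold PJ
  have h1 : (R i).filter (fun r => ∀ h : v ∈ E i, r ⟨v, h⟩ = d) = R i :=
    Finset.filter_true_of_mem (fun r _ h => absurd h hi)
  simp only [h1]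
  apply Finset.image_congr
  intro r _
  funext x
  have hxv : (↑x : V) ≠ v := fun h => hi (h ▸ x.2)
  simp [Finset.mem_insert, hxv]

omit [Fintype V] [Fintype ι] in
lemma agm_partb (E : ι → Finset V) (d0 : D) (A : Finset V) (v : V)
    (R : (i : ι) → Finset ({x // x ∈ E i} → D)) (hv : v ∉ A) (i : ι) (h : v ∈ E i) :
    ∑ d : D, (PJ E d0 A (fun i => (R i).filter (fun r => ∀ h : v ∈ E i, r ⟨v, h⟩ = d)) i).card
      ≤ (PJ E d0 (insert v A) R i).card := by
  classical
  set Q : D → Finset ({x // x ∈ E i} → D) :=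
    fun d => PJ E d0 A (fun i => (R i).filter (fun r => ∀ h : v ∈ E i, r ⟨v, h⟩ = d)) i with hQ
  set φ : D → ({x // x ∈ E i} → D) → ({x // x ∈ E i} → D) :=
    fun d s => Function.update s ⟨v, h⟩ d with hφ
  have hmemval : ∀ d s, s ∈ Q d → s ⟨v, h⟩ = d0 := by
    intro d s hs
    rw [hQ] at hs
    simp only [PJ, Finset.mem_image] at hs
    obtain ⟨r, _, rfl⟩ := hs
    simp [hv]
  have hinj : ∀ d : D, Set.InjOn (φ d) (Q d) := by
    intro d s1 hs1 s2 hs2 heq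
    funext x
    rcases eq_or_ne x ⟨v, h⟩ with rfl | hx
    · rw [hmemval d s1 hs1, hmemval d s2 hs2]
    · have := congrFun heq x
      simpa only [hφ, Function.update_of_ne hx] using this
  have hsub : ∀ d : D, (Q d).image (φ d) ⊆ PJ E d0 (insert v A) R i := by
    intro d s hs
    simp only [Finset.mem_image] at hs
    obtain ⟨s', hs', rfl⟩ := hs
    rw [hQ] at hs'
    simp only [PJ, Finset.mem_image] at hs'
    obtain ⟨r, hr, rfl⟩ := hs'
    simp only [Finset.mem_filter] at hr
    simp only [PJ, Finset.mem_image]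
    refine ⟨r, hr.1, ?_⟩
    funext x
    rcases eq_or_ne x ⟨v, h⟩ with rfl | hx
    · simp only [hφ, Function.update_self]
      simp [hr.2 h]
    · have hxv : (↑x : V) ≠ v := fun hh => hx (Subtype.ext hh)
      simp only [hφ, Function.update_of_ne hx]
      simp [Finset.mem_insert, hxv]
  have hdisj : ∀ d1 ∈ (Finset.univ : Finset D), ∀ d2 ∈ (Finset.univ : Finset D), d1 ≠ d2 →
      Disjoint ((Q d1).image (φ d1)) ((Q d2).image (φ d2)) := by
    intro d1 _ d2 _ hne
    rw [Finset.disjoint_left]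
    intro s hs1 hs2
    simp only [Finset.mem_image] at hs1 hs2
    obtain ⟨s1, _, rfl⟩ := hs1
    obtain ⟨s2, _, he⟩ := hs2
    apply hne
    have := congrFun he ⟨v, h⟩
    simpa [hφ] using this.symm
  calc ∑ d : D, (Q d).card = ∑ d : D, ((Q d).image (φ d)).card := by
        refine Finset.sum_congr rfl fun d _ => ?_
        rw [Finset.card_image_of_injOn (hinj d)]
    _ = (Finset.univ.biUnion (fun d => (Q d).image (φ d))).card := (Finset.card_biUnion hdisj).symm
    _ ≤ (PJ E d0 (insert v A) R i).card := by
        apply Finset.card_le_card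
        exact Finset.biUnion_subset.2 (fun d _ => hsub d)

/-- Main induction for the AGM bound, over the set `A` of "processed" vertices. -/
lemma agm_main (E : ι → Finset V) (d0 : D) (f : ι → ℝ) (hf0 : ∀ i, 0 ≤ f i)
    (hfcover : ∀ v : V, 1 ≤ ∑ i ∈ Finset.univ.filter (fun i => v ∈ E i), f i)
    (A : Finset V) :
    ∀ R : (i : ι) → Finset ({x // x ∈ E i} → D),
      ((TT E d0 A R).card : ENNReal) ≤ ∏ i, ((PJ E d0 A R i).card : ENNReal) ^ f i := by
  induction A using Finset.induction with
  | empty =>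
    intro R
    by_cases hR : ∀ i, (R i).Nonempty
    · have h1 : (TT E d0 ∅ R).card ≤ 1 := by
        refine Finset.card_le_one.2 (fun t ht t' ht' => ?_)
        rw [mem_TT] at ht ht'
        funext x
        rw [ht.1 x (notMem_empty x), ht'.1 x (notMem_empty x)]
      have h2 : ∀ i, (PJ E d0 ∅ R i).card = 1 := by
        intro i
        have he : (fun (r : {x // x ∈ E i} → D) (x : {x // x ∈ E i}) =>
            if (↑x : V) ∈ (∅ : Finset V) then r x else d0) = fun _ => (fun _ => d0) := by
          funext r x; simp
        rw [PJ, he, Finset.image_const (hR i)]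
        simp
      calc ((TT E d0 ∅ R).card : ENNReal) ≤ 1 := by exact_mod_cast h1
        _ = ∏ i, ((PJ E d0 ∅ R i).card : ENNReal) ^ f i := by simp [h2]
    · push_neg at hR
      obtain ⟨i0, hi0⟩ := hR
      have : TT E d0 ∅ R = ∅ := by
        refine Finset.eq_empty_of_forall_notMem (fun t ht => ?_)
        rw [mem_TT] at ht
        obtain ⟨r, hr, -⟩ := ht.2 i0
        simp [hi0] at hr
      simp [this]
  | @insert v A hv ih =>
    intro R
    set Rd : D → (i : ι) → Finset ({x // x ∈ E i} → D) :=
      fun d i => (R i).filter (fun r => ∀ h : v ∈ E i, r ⟨v, h⟩ = d) with hRd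
    have step1 : (TT E d0 (insert v A) R).card = ∑ d : D, (TT E d0 A (Rd d)).card := by
      rw [Finset.card_eq_sum_card_fiberwise (f := fun t => t v) (t := (Finset.univ : Finset D))
        (fun x _ => mem_univ _)]
      refine Finset.sum_congr rfl fun d _ => ?_
      refine Finset.card_bij (fun t _ => Function.update t v d0) ?_ ?_ ?_
      · intro t ht
        rw [mem_filter, mem_TT] at ht
        obtain ⟨⟨h1, h2⟩, htv⟩ := ht
        rw [mem_TT]
        constructor
        · intro x hx
          rcases eq_or_ne x v with rfl | hxv
          · simp
          · simp only [Function.update_of_ne hxv]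
            exact h1 x (by simp [hxv, hx])
        · intro i
          obtain ⟨r, hr, hr2⟩ := h2 i
          refine ⟨r, ?_, ?_⟩
          · simp only [hRd, mem_filter]
            exact ⟨hr, fun h => by rw [← hr2 ⟨v, h⟩ (mem_insert_self v A)]; exact htv⟩
          · intro x hxA
            have hxv : (↑x : V) ≠ v := fun h => hv (h ▸ hxA)
            simp only [Function.update_of_ne hxv]
            exact hr2 x (mem_insert_of_mem hxA)
      · intro t1 ht1 t2 ht2 heq
        rw [mem_filter] at ht1 ht2
        funext x
        rcases eq_or_ne x v with rfl | hxv
        · rw [ht1.2, ht2.2]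
        · have := congrFun heq x
          simpa only [Function.update_of_ne hxv] using this
      · intro s hs
        rw [mem_TT] at hs
        obtain ⟨h1, h2⟩ := hs
        refine ⟨Function.update s v d, ?_, ?_⟩
        · rw [mem_filter, mem_TT]
          refine ⟨⟨?_, ?_⟩, Function.update_self v d s⟩
          · intro x hx
            have hxv : x ≠ v := fun h => hx (h ▸ mem_insert_self v A)
            simp only [Function.update_of_ne hxv]
            exact h1 x (fun hxA => hx (mem_insert_of_mem hxA))
          · intro i
            obtain ⟨r, hr, hr2⟩ := h2 i
            simp only [hRd, mem_filter] at hr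
            refine ⟨r, hr.1, ?_⟩
            intro x hx
            rcases eq_or_ne (↑x : V) v with hxv | hxv
            · have hvE : v ∈ E i := hxv ▸ x.2
              have hx2 : x = ⟨v, hvE⟩ := Subtype.ext hxv
              rw [hx2]
              show Function.update s v d v = r ⟨v, hvE⟩
              rw [Function.update_self, hr.2 hvE]
            · simp only [Function.update_of_ne hxv]
              refine hr2 x ?_
              rcases mem_insert.1 hx with h | h
              · exact absurd h hxv
              · exact h
        · funext x
          rcases eq_or_ne x v with rfl | hxv
          · simp only [Function.update_self]
            exact (h1 x hv).symm
          · simp only [Function.update_of_ne hxv]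
    calc ((TT E d0 (insert v A) R).card : ENNReal)
        = ∑ d : D, ((TT E d0 A (Rd d)).card : ENNReal) := by
          rw [step1]; push_cast; ring
      _ ≤ ∑ d : D, ∏ i, ((PJ E d0 A (Rd d) i).card : ENNReal) ^ f i :=
          Finset.sum_le_sum fun d _ => ih (Rd d)
      _ ≤ ∏ i, ((PJ E d0 (insert v A) R i).card : ENNReal) ^ f i := by
          refine agm_chain (Finset.univ.filter (fun i => v ∈ E i))
            (fun i d => ((PJ E d0 A (Rd d) i).card : ENNReal))
            (fun i => ((PJ E d0 (insert v A) R i).card : ENNReal)) f hf0 (hfcover v) ?_ ?_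
          · intro i hi
            have h : v ∈ E i := (Finset.mem_filter.1 hi).2
            have hb := agm_partb E d0 A v R hv i h
            simp only [hRd]
            exact_mod_cast hb
          · intro i hi d
            have h : v ∉ E i := fun hh => hi (Finset.mem_filter.2 ⟨mem_univ i, hh⟩)
            simp only [hRd]
            rw [agm_parta E d0 A v R i h d]

end AGMAux

/-- **AGM bound (fractional edge cover bound on the join size).**
Let `H = (V, E)` be a hypergraph in which every hyperedge is nonempty and every
vertex belongs to at least one hyperedge, let `f` be a fractional edge cover of `H`,
let `D` be a finite domain, and for each hyperedge `e ∈ E` let `R e` be a finite set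
of functions `e → D`. Then the join (the set of all tuples `t : V → D` whose
restriction to `e` belongs to `R e` for every `e ∈ E`) has size at most
`∏_{e ∈ E} |R e|^{f(e)}`. -/
theorem agm_join_bound
    (V D : Type) [Fintype V] [DecidableEq V] [Fintype D] [DecidableEq D]
    (E : Finset (Finset V))
    (hEne : ∀ e ∈ E, e.Nonempty)
    (hcov : ∀ v : V, ∃ e ∈ E, v ∈ e)
    (f : Finset V → ℝ)
    (hf0 : ∀ e ∈ E, 0 ≤ f e)
    (hf1 : ∀ e ∈ E, f e ≤ 1)
    (hfcover : ∀ v : V, 1 ≤ ∑ e ∈ E.filter (fun e => v ∈ e), f e)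
    (R : (e : Finset V) → Finset ({x // x ∈ e} → D)) :
    ((Finset.univ.filter
        (fun t : V → D => ∀ e ∈ E, (fun v : {x // x ∈ e} => t v) ∈ R e)).card : ℝ) ≤
      ∏ e ∈ E, ((R e).card : ℝ) ^ f e := by
  rcases isEmpty_or_nonempty D with hD | hD
  · rcases isEmpty_or_nonempty V with hV | hV
    · -- V empty: E must be empty, LHS ≤ 1 = RHS
      have hE : E = ∅ := by
        refine Finset.eq_empty_of_forall_notMem (fun e he => ?_)
        obtain ⟨x, _⟩ := hEne e he
        exact (IsEmpty.false x)
      subst hE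
      simp only [Finset.prod_empty]
      have : (Finset.univ.filter
          (fun t : V → D => ∀ e ∈ (∅ : Finset (Finset V)), (fun v : {x // x ∈ e} => t v) ∈ R e)).card
          ≤ Fintype.card (V → D) := le_trans (Finset.card_filter_le _ _) (le_of_eq Finset.card_univ)
      have h2 : Fintype.card (V → D) = 1 := by
        rw [Fintype.card_fun]
        simp [Fintype.card_eq_zero_iff.2 hV]
      exact_mod_cast le_trans this (le_of_eq h2)
    · -- D empty, V nonempty: no tuples at all
      haveI : IsEmpty (V → D) := ⟨fun t => (hD.false (t (Classical.arbitrary V)))⟩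
      rw [Finset.univ_eq_empty, Finset.filter_empty]
      simp only [Finset.card_empty, Nat.cast_zero]
      exact Finset.prod_nonneg fun e _ => Real.rpow_nonneg (Nat.cast_nonneg _) _
  · obtain ⟨d0⟩ := hD
    -- index edges by the subtype of E
    have key := agm_main (ι := {e // e ∈ E}) (fun i => (i : Finset V)) d0 (fun i => f i)
      (fun i => hf0 i i.2) ?_ Finset.univ (fun i => R i)
    · -- translate both sides
      have hLHS : (Finset.univ.filter
          (fun t : V → D => ∀ e ∈ E, (fun v : {x // x ∈ e} => t v) ∈ R e))
          = TT (ι := {e // e ∈ E}) (fun i => (i : Finset V)) d0 Finset.univ (fun i => R i) := by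
        unfold TT
        refine Finset.filter_congr fun t _ => ?_
        constructor
        · intro h
          refine ⟨fun x hx => absurd (mem_univ x) hx, fun i => ?_⟩
          exact ⟨fun v => t v, h i i.2, fun x _ => rfl⟩
        · intro ⟨_, h⟩ e he
          obtain ⟨r, hr, hr2⟩ := h ⟨e, he⟩
          have : (fun v : {x // x ∈ e} => t v) = r := funext fun x => hr2 x (mem_univ _)
          rwa [this]
      have hRHS : ∀ i : {e // e ∈ E},
          PJ (fun i : {e // e ∈ E} => (i : Finset V)) d0 Finset.univ (fun i => R i) i = R i := by
        intro i
        unfold PJ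
        have : (fun (r : {x // x ∈ (i : Finset V)} → D) (x : {x // x ∈ (i : Finset V)}) =>
            if (↑x : V) ∈ (Finset.univ : Finset V) then r x else d0) = id := by
          funext r x; simp
        rw [this, Finset.image_id]
      rw [hLHS] at *
      have key2 : ((TT (ι := {e // e ∈ E}) (fun i => (i : Finset V)) d0 Finset.univ
          (fun i => R i)).card : ENNReal) ≤ ∏ e ∈ E, ((R e).card : ENNReal) ^ f e := by
        refine le_trans key (le_of_eq ?_)
        rw [← Finset.prod_attach E (fun e => ((R e).card : ENNReal) ^ f e),
          ← Finset.univ_eq_attach]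
        exact Finset.prod_congr rfl fun i _ => by rw [hRHS i]
      have htop : (∏ e ∈ E, ((R e).card : ENNReal) ^ f e) ≠ ⊤ := by
        refine (ENNReal.prod_lt_top ?_).ne
        intro e he
        exact ENNReal.rpow_lt_top_of_nonneg (hf0 e he) (ENNReal.natCast_ne_top _)
      calc ((TT (ι := {e // e ∈ E}) (fun i => (i : Finset V)) d0 Finset.univ
            (fun i => R i)).card : ℝ)
          = ((((TT (ι := {e // e ∈ E}) (fun i => (i : Finset V)) d0 Finset.univ
            (fun i => R i)).card : ENNReal)).toReal) := by simp
        _ ≤ (∏ e ∈ E, ((R e).card : ENNReal) ^ f e).toReal := ENNReal.toReal_mono htop key2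
        _ = ∏ e ∈ E, ((R e).card : ℝ) ^ f e := by
            rw [ENNReal.toReal_prod]
            refine Finset.prod_congr rfl fun e he => ?_
            rw [← ENNReal.toReal_rpow]
            simp
    · -- cover condition for the subtype indexing
      intro v
      have := hfcover v
      rw [Finset.sum_filter] at this
      rw [Finset.sum_filter, Finset.univ_eq_attach]
      calc (1 : ℝ) ≤ ∑ e ∈ E, if v ∈ e then f e else 0 := this
        _ = ∑ i ∈ E.attach, if v ∈ (i : Finset V) then f i else 0 :=
            (Finset.sum_attach E (fun e => if v ∈ e then f e else 0)).symm
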